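/- Let Q(x_0,…,x_n) ∈ ℂ[x_0,…,x_n] be a quadratic form of Waring rank n+1 and let B be an invertible (n+1)×(n+1) complex matrix such that the change of variables (x_0,…,x_n) = (y_0,…,y_n)B transforms Q into y_0^2 + ⋯ + y_n^2. Then for a nonzero vector a = (a_0,…,a_n) ∈ ℂ^{n+1}, the linear form a_0x_0 + ⋯ + a_nx_n lies in the forbidden locus F_Q if and only if a Bᵀ B aᵀ = 0; that is, F_Q = V(Q̌) ⊂ ℙ^n where Q̌(X_0,…,X_n) = (X_0 ⋯ X_n) BᵀB (X_0 ⋯ X_n)ᵀ. -/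

import Mathlib

open MvPolynomial

noncomputable section

/-- The linear form `c₀x₀ + ⋯ + cₙxₙ` with coefficient vector `c`. -/
def lin {σ : Type*} [Fintype σ] (c : σ → ℂ) : MvPolynomial σ ℂ :=
  ∑ i, C (c i) * X i

/-- `F` admits a Waring decomposition `F = L₁^d + ⋯ + L_r^d`. -/
def HasWaringDecomp {σ : Type*} [Fintype σ] (d : ℕ) (F : MvPolynomial σ ℂ) (r : ℕ) : Prop :=
  ∃ L : Fin r → σ → ℂ, F = ∑ j, lin (L j) ^ d

/-- The Waring rank of `F` (as a form of degree `d`). -/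
def waringRank {σ : Type*} [Fintype σ] (d : ℕ) (F : MvPolynomial σ ℂ) : ℕ :=
  sInf {r | HasWaringDecomp d F r}

/-- The linear form with coefficient vector `a` lies in the Waring locus of `F`:
there are linear forms `L₂, …, L_r` with `r = rk F` such that `F` lies in the
`ℂ`-linear span of `L^d, L₂^d, …, L_r^d`. -/
def InWaringLocus {σ : Type*} [Fintype σ] (d : ℕ) (F : MvPolynomial σ ℂ) (a : σ → ℂ) : Prop :=
  ∃ (c : Fin (waringRank d F) → ℂ) (L : Fin (waringRank d F) → σ → ℂ)
    (j₀ : Fin (waringRank d F)), L j₀ = a ∧ F = ∑ j, c j • lin (L j) ^ d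

namespace WAux

variable {m : ℕ}

lemma eval_lin (c x : Fin m → ℂ) : eval x (lin c) = dotProduct c x := by
  simp [lin, dotProduct]

lemma lin_single (j : Fin m) : lin (Pi.single j 1 : Fin m → ℂ) = X j := by
  simp [lin, Pi.single_apply]

lemma aeval_lin (M : Matrix (Fin m) (Fin m) ℂ) (c : Fin m → ℂ) :
    aeval (fun j => ∑ i, C (M i j) * X i) (lin c) = lin (M.mulVec c) := by
  simp only [lin, map_sum, map_mul, aeval_C, aeval_X, algebraMap_eq, Finset.mul_sum,
    Matrix.mulVec, dotProduct]
  rw [Finset.sum_comm]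
  refine Finset.sum_congr rfl fun k _ => ?_
  rw [Finset.sum_mul]
  refine Finset.sum_congr rfl fun i _ => ?_
  ring

lemma aeval_aeval' (M M' : Matrix (Fin m) (Fin m) ℂ) (p : MvPolynomial (Fin m) ℂ) :
    aeval (fun j => ∑ i, C (M i j) * X i) (aeval (fun j => ∑ i, C (M' i j) * X i) p)
      = aeval (fun j => ∑ i, C ((M * M') i j) * X i) p := by
  have : (aeval (fun j => ∑ i, C (M i j) * X i)).comp
      (aeval (fun j => ∑ i, C (M' i j) * X i))
      = (aeval (fun j => ∑ i, C ((M * M') i j) * X i) :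
        MvPolynomial (Fin m) ℂ →ₐ[ℂ] MvPolynomial (Fin m) ℂ) := by
    apply algHom_ext
    intro j
    have h2 : ∀ (N : Matrix (Fin m) (Fin m) ℂ),
        (∑ i, C (N i j) * X i : MvPolynomial (Fin m) ℂ) = lin (fun i => N i j) := fun N => rfl
    simp only [AlgHom.comp_apply, aeval_X, h2, aeval_lin]
    congr 1
  exact DFunLike.congr_fun this p


lemma aeval_id (p : MvPolynomial (Fin m) ℂ) :
    aeval (fun j => ∑ i, C ((1 : Matrix (Fin m) (Fin m) ℂ) i j) * X i) p = p := by
  have : (aeval (fun j => ∑ i, C ((1 : Matrix (Fin m) (Fin m) ℂ) i j) * X i) :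
      MvPolynomial (Fin m) ℂ →ₐ[ℂ] MvPolynomial (Fin m) ℂ) = AlgHom.id ℂ _ := by
    apply algHom_ext; intro j
    simp [Matrix.one_apply, apply_ite C, ite_mul, Finset.sum_ite_eq']
  exact DFunLike.congr_fun this p

lemma map_decomp {r d : ℕ} (M : Matrix (Fin m) (Fin m) ℂ) (c : Fin r → ℂ)
    (L : Fin r → Fin m → ℂ) :
    aeval (fun j => ∑ i, C (M i j) * X i) (∑ j, c j • lin (L j) ^ d)
      = ∑ j, c j • lin (M.mulVec (L j)) ^ d := by
  rw [map_sum]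
  refine Finset.sum_congr rfl fun j _ => ?_
  rw [map_smul, map_pow, aeval_lin]

lemma map_decomp' {r d : ℕ} (M : Matrix (Fin m) (Fin m) ℂ) (L : Fin r → Fin m → ℂ) :
    aeval (fun j => ∑ i, C (M i j) * X i) (∑ j, lin (L j) ^ d)
      = ∑ j, lin (M.mulVec (L j)) ^ d := by
  rw [map_sum]
  refine Finset.sum_congr rfl fun j _ => ?_
  rw [map_pow, aeval_lin]


lemma hasWaringDecomp_iff_map {d r : ℕ} (Q : MvPolynomial (Fin m) ℂ)
    (M : Matrix (Fin m) (Fin m) ℂ) (hM : IsUnit M.det) :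
    HasWaringDecomp d Q r ↔ HasWaringDecomp d (aeval (fun j => ∑ i, C (M i j) * X i) Q) r := by
  constructor
  · rintro ⟨L, rfl⟩
    exact ⟨fun j => M.mulVec (L j), map_decomp' M L⟩
  · rintro ⟨L, h⟩
    refine ⟨fun j => M⁻¹.mulVec (L j), ?_⟩
    have h2 := congrArg (aeval (fun j => ∑ i, C (M⁻¹ i j) * X i)) h
    rw [aeval_aeval', Matrix.nonsing_inv_mul M hM, aeval_id, map_decomp'] at h2
    exact h2

lemma waringRank_map {d : ℕ} (Q : MvPolynomial (Fin m) ℂ)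
    (M : Matrix (Fin m) (Fin m) ℂ) (hM : IsUnit M.det) :
    waringRank d (aeval (fun j => ∑ i, C (M i j) * X i) Q) = waringRank d Q := by
  unfold waringRank
  congr 1
  ext r
  exact (hasWaringDecomp_iff_map Q M hM).symm

lemma inWaringLocus_iff_of_rank {σ : Type*} [Fintype σ] {d r : ℕ} {F : MvPolynomial σ ℂ}
    (h : waringRank d F = r) (a : σ → ℂ) :
    InWaringLocus d F a ↔ ∃ (c : Fin r → ℂ) (L : Fin r → σ → ℂ) (j₀ : Fin r),
      L j₀ = a ∧ F = ∑ j, c j • lin (L j) ^ d := by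
  subst h; exact Iff.rfl

lemma inWaringLocus_map {d : ℕ} (Q : MvPolynomial (Fin m) ℂ)
    (M : Matrix (Fin m) (Fin m) ℂ) (hM : IsUnit M.det) (a : Fin m → ℂ) :
    InWaringLocus d Q a ↔
      InWaringLocus d (aeval (fun j => ∑ i, C (M i j) * X i) Q) (M.mulVec a) := by
  rw [inWaringLocus_iff_of_rank (rfl : waringRank d Q = _) a,
    inWaringLocus_iff_of_rank (waringRank_map Q M hM)]
  constructor
  · rintro ⟨c, L, j₀, hL, hF⟩
    refine ⟨c, fun j => M.mulVec (L j), j₀, by show M.mulVec (L j₀) = _; rw [hL], ?_⟩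
    show _ = ∑ j, c j • lin (M.mulVec (L j)) ^ d
    conv_lhs => rw [hF]
    rw [map_decomp]
  · rintro ⟨c, L, j₀, hL, h⟩
    refine ⟨c, fun j => M⁻¹.mulVec (L j), j₀, ?_, ?_⟩
    · show M⁻¹.mulVec (L j₀) = a
      rw [hL, Matrix.mulVec_mulVec, Matrix.nonsing_inv_mul M hM, Matrix.one_mulVec]
    · have h2 := congrArg (aeval (fun j => ∑ i, C (M⁻¹ i j) * X i)) h
      rw [aeval_aeval', Matrix.nonsing_inv_mul M hM, aeval_id, map_decomp] at h2
      exact h2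


lemma eval_decomp {r d : ℕ} (c : Fin r → ℂ) (L : Fin r → Fin m → ℂ) (x : Fin m → ℂ) :
    eval x (∑ j, c j • lin (L j) ^ d) = ∑ j, c j * (dotProduct (L j) x) ^ d := by
  rw [map_sum]
  refine Finset.sum_congr rfl fun j _ => ?_
  rw [smul_eval, map_pow, eval_lin]

lemma eval_Q0 (x : Fin m → ℂ) :
    eval x (∑ i : Fin m, (X i : MvPolynomial (Fin m) ℂ) ^ 2) = dotProduct x x := by
  simp [dotProduct, sq]

lemma core_bwd {c : Fin m → ℂ} {L : Fin m → Fin m → ℂ} (j₀ : Fin m)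
    (h : (∑ i : Fin m, (X i : MvPolynomial (Fin m) ℂ) ^ 2) = ∑ j, c j • lin (L j) ^ 2) :
    dotProduct (L j₀) (L j₀) ≠ 0 := by
  have hx : ∀ x : Fin m → ℂ,
      ∑ j, c j * (dotProduct (L j) x) ^ 2 = dotProduct x x := by
    intro x
    have h' := congrArg (eval x) h
    rw [eval_Q0, eval_decomp] at h'
    exact h'.symm
  have key : ∀ i k : Fin m, ∑ j, c j * (L j i * L j k) = if i = k then 1 else 0 := by
    intro i k
    have h1 := hx (Pi.single i 1 + Pi.single k 1)
    have h2 := hx (Pi.single i 1)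
    have h3 := hx (Pi.single k 1)
    simp only [dotProduct_add, add_dotProduct, dotProduct_single,
      single_dotProduct, mul_one, one_mul, Pi.add_apply, Pi.single_apply,
      eq_self_iff_true, if_true] at h1 h2 h3
    have hs : ∑ j, (c j * (L j i + L j k) ^ 2 - c j * (L j i) ^ 2 - c j * (L j k) ^ 2)
        = ∑ j, 2 * (c j * (L j i * L j k)) :=
      Finset.sum_congr rfl fun j _ => by ring
    rw [Finset.sum_sub_distrib, Finset.sum_sub_distrib, h1, h2, h3, ← Finset.mul_sum] at hs
    by_cases hik : i = k
    · subst hik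
      simp only [eq_self_iff_true, if_true] at hs ⊢
      refine mul_left_cancel₀ (two_ne_zero (α := ℂ)) ?_
      rw [← hs]; norm_num
    · have hik' : ¬ (k = i) := fun hh => hik hh.symm
      simp only [if_neg hik, if_neg hik'] at hs ⊢
      refine mul_left_cancel₀ (two_ne_zero (α := ℂ)) ?_
      rw [← hs]; norm_num
  set N : Matrix (Fin m) (Fin m) ℂ := Matrix.of fun i j => L j i with hN
  have hND : N * (Matrix.diagonal c * N.transpose) = 1 := by
    ext i k
    rw [Matrix.mul_apply]
    have he : ∀ j, N i j * (Matrix.diagonal c * N.transpose) j k = c j * (L j i * L j k) := by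
      intro j
      rw [Matrix.diagonal_mul, Matrix.transpose_apply, hN]
      simp only [Matrix.of_apply]
      ring
    rw [Finset.sum_congr rfl fun j _ => he j, key i k, Matrix.one_apply]
  have hcomm : Matrix.diagonal c * N.transpose * N = 1 := mul_eq_one_comm.mp hND
  have hfin : c j₀ * dotProduct (L j₀) (L j₀) = 1 := by
    have h4 : (Matrix.diagonal c * N.transpose * N) j₀ j₀ = (1 : Matrix (Fin m) (Fin m) ℂ) j₀ j₀ :=
      congrArg (fun A : Matrix (Fin m) (Fin m) ℂ => A j₀ j₀) hcomm
    rw [Matrix.mul_apply, Matrix.one_apply_eq] at h4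
    rw [← h4, dotProduct, Finset.mul_sum]
    refine Finset.sum_congr rfl fun i _ => ?_
    rw [Matrix.diagonal_mul, Matrix.transpose_apply, hN]
    simp only [Matrix.of_apply]
    ring
  intro h0
  rw [h0, mul_zero] at hfin
  exact zero_ne_one hfin


lemma core_fwd {n : ℕ} {b : Fin (n + 1) → ℂ} (hb : dotProduct b b ≠ 0) :
    ∃ (c : Fin (n + 1) → ℂ) (L : Fin (n + 1) → Fin (n + 1) → ℂ) (j₀ : Fin (n + 1)),
      L j₀ = b ∧ (∑ i : Fin (n + 1), (X i : MvPolynomial (Fin (n + 1)) ℂ) ^ 2)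
        = ∑ j, c j • lin (L j) ^ 2 := by
  obtain ⟨u, hu2, hu⟩ : ∃ u : ℂ, u ^ 2 = dotProduct b b ∧ u * (u - b 0) ≠ 0 := by
    obtain ⟨t, ht⟩ := IsAlgClosed.exists_pow_nat_eq (k := ℂ) (dotProduct b b) zero_lt_two
    have ht0 : t ≠ 0 := by
      rintro rfl
      rw [← ht] at hb
      exact hb (by ring)
    by_cases hc : t - b 0 = 0
    · refine ⟨-t, by rw [neg_pow]; simpa using ht, ?_⟩
      have hb0 : b 0 = t := by linear_combination -hc
      rw [hb0]
      intro hcon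
      apply ht0
      have h2 : (2 : ℂ) * (t * t) = 0 := by linear_combination hcon
      have := mul_eq_zero.mp h2
      rcases this with h | h
      · exact absurd h two_ne_zero
      · exact mul_self_eq_zero.mp h
    · exact ⟨t, ht, mul_ne_zero ht0 hc⟩
  have hu0 : u ≠ 0 := fun h => hu (by rw [h, zero_mul])
  have hu3 : u - b 0 ≠ 0 := fun h => hu (by rw [h, mul_zero])
  set e₀ : Fin (n + 1) → ℂ := Pi.single 0 1 with he
  set w : Fin (n + 1) → ℂ := b - u • e₀ with hw
  have hww : dotProduct w w = 2 * (u * (u - b 0)) := by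
    simp only [hw, he, sub_dotProduct, dotProduct_sub, smul_dotProduct,
      dotProduct_smul, dotProduct_single, single_dotProduct,
      Pi.smul_apply, Pi.sub_apply, Pi.single_apply, smul_eq_mul, mul_one, one_mul,
      eq_self_iff_true, if_true]
    rw [← hu2]
    ring
  have hww0 : dotProduct w w ≠ 0 := by
    rw [hww]; exact mul_ne_zero two_ne_zero hu
  set r : ℂ := 2 * (dotProduct w w)⁻¹ with hr
  set H : Matrix (Fin (n + 1)) (Fin (n + 1)) ℂ := 1 - r • Matrix.vecMulVec w w with hH
  have hWW : Matrix.vecMulVec w w * Matrix.vecMulVec w w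
      = dotProduct w w • Matrix.vecMulVec w w := by
    ext i j
    simp only [Matrix.mul_apply, Matrix.vecMulVec_apply, Matrix.smul_apply, smul_eq_mul,
      dotProduct]
    rw [Finset.sum_mul]
    exact Finset.sum_congr rfl fun k _ => by ring
  have hWsymm : (Matrix.vecMulVec w w).transpose = Matrix.vecMulVec w w := by
    ext i j
    rw [Matrix.transpose_apply, Matrix.vecMulVec_apply, Matrix.vecMulVec_apply, mul_comm]
  have hHT : H.transpose = H := by
    rw [hH, Matrix.transpose_sub, Matrix.transpose_one, Matrix.transpose_smul, hWsymm]
  have hrr : r * r * dotProduct w w = r + r := by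
    rw [hr]; field_simp; ring
  have hHH : H * H = 1 := by
    have e1 : (r • Matrix.vecMulVec w w) * (r • Matrix.vecMulVec w w)
        = (r * r * dotProduct w w) • Matrix.vecMulVec w w := by
      rw [Matrix.smul_mul, Matrix.mul_smul, hWW, smul_smul, smul_smul, mul_assoc]
    rw [hH, sub_mul, mul_sub, mul_sub]
    simp only [mul_one, one_mul]
    rw [e1, hrr, add_smul]
    abel
  have he0 : e₀ 0 = 1 := by rw [he]; exact Pi.single_eq_same 0 1
  have hcol0 : ∀ i, H i 0 = u⁻¹ * b i := by
    intro i
    rw [hH]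
    simp only [Matrix.sub_apply, Matrix.smul_apply, Matrix.vecMulVec_apply, Matrix.one_apply,
      smul_eq_mul, hr, hww, hw, Pi.sub_apply, Pi.smul_apply, Pi.single_apply, smul_eq_mul]
    by_cases hi : i = 0
    · subst hi
      simp only [eq_self_iff_true, if_true, mul_one, he0]
      rw [← hw, hww]
      field_simp
      ring
    · have hei : e₀ i = 0 := by rw [he]; exact Pi.single_eq_of_ne hi 1
      simp only [if_neg hi, eq_self_iff_true, if_true, mul_zero, sub_zero, mul_one, zero_sub,
        he0, hei]
      rw [← hw, hww]
      field_simp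
      ring
  refine ⟨fun j => if j = 0 then (dotProduct b b)⁻¹ else 1,
    fun j => if j = 0 then b else fun i => H i j, 0, if_pos rfl, ?_⟩
  apply MvPolynomial.funext
  intro x
  rw [eval_Q0, eval_decomp]
  have step : ∀ j : Fin (n + 1),
      (if j = 0 then (dotProduct b b)⁻¹ else 1) *
        dotProduct (if j = 0 then b else fun i => H i j) x ^ 2
      = (H.transpose.mulVec x) j * (H.transpose.mulVec x) j := by
    intro j
    have hyj : (H.transpose.mulVec x) j = dotProduct (fun i => H i j) x := by
      simp [Matrix.mulVec, Matrix.transpose_apply, dotProduct]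
    by_cases hj : j = 0
    · subst hj
      rw [if_pos rfl, if_pos rfl, hyj]
      have hc : dotProduct (fun i => H i 0) x = u⁻¹ * dotProduct b x := by
        simp only [dotProduct, hcol0]
        rw [Finset.mul_sum]
        exact Finset.sum_congr rfl fun i _ => by ring
      rw [hc, ← hu2]
      field_simp
    · rw [if_neg hj, if_neg hj, hyj, one_mul, sq]
  refine ((Finset.sum_congr rfl fun j _ => step j).trans ?_).symm
  have hdd : ∑ j, (H.transpose.mulVec x) j * (H.transpose.mulVec x) j
      = dotProduct (H.transpose.mulVec x) (H.transpose.mulVec x) := rfl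
  rw [hdd, Matrix.dotProduct_mulVec, Matrix.vecMul_transpose, hHT, Matrix.mulVec_mulVec, hHH,
    Matrix.one_mulVec]

end WAux

/-- forbidden locus of a full-rank quadric after a change of variables:
if `(x₀,…,xₙ) = (y₀,…,yₙ)B` turns `Q` into `y₀² + ⋯ + yₙ²`, then a nonzero linear form
with coefficient vector `a` is forbidden for `Q` iff `a Bᵀ B aᵀ = 0`. -/
theorem forbidden_locus_quadric_change_of_variables (n : ℕ)
    (Q : MvPolynomial (Fin (n + 1)) ℂ) (hQ : Q.IsHomogeneous 2)
    (hrk : waringRank 2 Q = n + 1)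
    (B : Matrix (Fin (n + 1)) (Fin (n + 1)) ℂ) (hB : IsUnit B.det)
    (hchange : aeval (fun j => ∑ i, C (B i j) * X i) Q
      = ∑ i : Fin (n + 1), (X i : MvPolynomial (Fin (n + 1)) ℂ) ^ 2) :
    ∀ a : Fin (n + 1) → ℂ, a ≠ 0 →
      (¬ InWaringLocus 2 Q a ↔ dotProduct a ((B.transpose * B).mulVec a) = 0) := by
  intro a _
  have hdot : dotProduct a ((B.transpose * B).mulVec a)
      = dotProduct (B.mulVec a) (B.mulVec a) := by
    rw [← Matrix.mulVec_mulVec, Matrix.dotProduct_mulVec, Matrix.vecMul_transpose]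
  have hloc : InWaringLocus 2 Q a ↔ InWaringLocus 2
      (∑ i : Fin (n + 1), (X i : MvPolynomial (Fin (n + 1)) ℂ) ^ 2) (B.mulVec a) := by
    rw [WAux.inWaringLocus_map Q B hB a, hchange]
  have hrk0 : waringRank 2
      (∑ i : Fin (n + 1), (X i : MvPolynomial (Fin (n + 1)) ℂ) ^ 2) = n + 1 := by
    rw [← hchange, WAux.waringRank_map Q B hB, hrk]
  rw [hdot, hloc, WAux.inWaringLocus_iff_of_rank hrk0]
  constructor
  · intro hno
    by_contra hne
    exact hno (WAux.core_fwd hne)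
  · rintro h0 ⟨c, L, j₀, hL, hdec⟩
    exact (hL ▸ WAux.core_bwd j₀ hdec) h0

end
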